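/- Let N ∈ ℕ with φ(N) ≥ 3, and suppose N is odd or divisible by 4. Let (c,d) with gcd(c,d,N)=1 represent a cusp of X₁(N). Then there exists t ∈ ℤ such that 2(d + tc) ≡ 0 mod N if and only if gcd(c,N) = 1. -/

import Mathlib

/-- let `φ(N) ≥ 3` and `N` odd or `4 ∣ N`, and let `(c,d)` with
`gcd(c,d,N) = 1` represent a cusp of `X₁(N)`.  Then there exists `t ∈ ℤ` with
`2(d + tc) ≡ 0 mod N` iff `gcd(c,N) = 1`. -/
theorem stmt7 (N : ℕ) (hN : 3 ≤ Nat.totient N) (hN4 : Odd N ∨ 4 ∣ N)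
    (c d : ℤ) (hgcd : Int.gcd c (Int.gcd d (N : ℤ)) = 1) :
    (∃ t : ℤ, (N : ℤ) ∣ 2 * (d + t * c)) ↔ Int.gcd c (N : ℤ) = 1 := by
  constructor
  · rintro ⟨t, ht⟩
    set g : ℕ := Int.gcd c (N : ℤ) with hg
    have hgc : (g : ℤ) ∣ c := Int.gcd_dvd_left c (N : ℤ)
    have hgN : (g : ℤ) ∣ (N : ℤ) := Int.gcd_dvd_right c (N : ℤ)
    have h1 : (g : ℤ) ∣ 2 * d + (2 * t) * c := by
      have := hgN.trans ht
      have e : 2 * (d + t * c) = 2 * d + (2 * t) * c := by ring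
      rwa [e] at this
    have hg2d : (g : ℤ) ∣ 2 * d := by
      have := dvd_sub h1 (hgc.mul_left (2 * t))
      simpa using this
    -- gcd(g, d) = 1
    have hk : Int.gcd (g : ℤ) d = 1 := by
      have h2 : (Int.gcd (g : ℤ) d : ℤ) ∣ c := (Int.gcd_dvd_left _ _).trans hgc
      have h3 : (Int.gcd (g : ℤ) d : ℤ) ∣ (Int.gcd d (N : ℤ) : ℤ) :=
        Int.dvd_coe_gcd (Int.gcd_dvd_right _ _) ((Int.gcd_dvd_left _ _).trans hgN)
      have h4 : (Int.gcd (g : ℤ) d : ℤ) ∣ (Int.gcd c (Int.gcd d (N : ℤ)) : ℤ) :=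
        Int.dvd_coe_gcd h2 h3
      rw [hgcd] at h4
      exact_mod_cast Int.eq_one_of_dvd_one (by positivity) h4
    have hcop : IsCoprime ((g : ℕ) : ℤ) d := Int.isCoprime_iff_gcd_eq_one.mpr hk
    have hg2 : (g : ℤ) ∣ 2 := hcop.dvd_of_dvd_mul_right hg2d
    have hg2' : g ∣ 2 := by exact_mod_cast Int.ofNat_dvd.mp (by exact_mod_cast hg2)
    rcases (Nat.dvd_prime Nat.prime_two).mp hg2' with h | h
    · exact h
    · exfalso
      have hgNnat : g ∣ N := by
        have := Int.ofNat_dvd.mp (by exact_mod_cast hgN)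
        exact this
      rcases hN4 with hodd | h4N
      · rw [h] at hgNnat
        exact (Nat.not_even_iff_odd.mpr hodd) (even_iff_two_dvd.mpr hgNnat)
      · -- g = 2 : then 2 ∣ c, d odd, but 4 ∣ N ∣ 2(d+tc) forces 2 ∣ d
        have h2c : (2 : ℤ) ∣ c := by rw [h] at hgc; exact_mod_cast hgc
        have h4N' : (4 : ℤ) ∣ (N : ℤ) := by exact_mod_cast h4N
        have h4dvd : (4 : ℤ) ∣ 2 * (d + t * c) := h4N'.trans ht
        have h2dtc : (2 : ℤ) ∣ d + t * c := by
          rcases h4dvd with ⟨k, hk'⟩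
          exact ⟨k, by linarith⟩
        have h2d : (2 : ℤ) ∣ d := by
          have := dvd_sub h2dtc (h2c.mul_left t)
          simpa using this
        have : IsCoprime (2 : ℤ) d := by rw [h] at hcop; exact_mod_cast hcop
        have := this.isUnit_of_dvd' dvd_rfl h2d
        rw [Int.isUnit_iff] at this
        omega
  · intro h
    obtain ⟨u, v, huv⟩ := Int.isCoprime_iff_gcd_eq_one.mpr h
    exact ⟨-d * u, 2 * (d * v), by linear_combination -2 * d * huv⟩
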